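/- Let R be a Prüfer domain and P a nonzero prime ideal. If there is a finitely generated ideal I ⊆ P such that every maximal ideal containing I contains P, then there is a finitely generated ideal J ⊆ P such that every ideal of R containing J is comparable (under inclusion) with P. -/

import Mathlib

/-- An ideal is divisorial if `I = (R : (R : I))`, phrased via fractional ideals. -/
def IsDivisorial (R : Type*) [CommRing R] [IsDomain R] (I : Ideal R) : Prop :=
  (1 / (1 / (I : FractionalIdeal (nonZeroDivisors R) (FractionRing R))) :
    FractionalIdeal (nonZeroDivisors R) (FractionRing R))
    = (I : FractionalIdeal (nonZeroDivisors R) (FractionRing R))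

/-- An ideal is invertible if it is a unit as a fractional ideal. -/
def IsInvertibleIdeal (R : Type*) [CommRing R] [IsDomain R] (I : Ideal R) : Prop :=
  IsUnit (I : FractionalIdeal (nonZeroDivisors R) (FractionRing R))

/-- A Prüfer domain: every nonzero finitely generated ideal is invertible. -/
def IsPrufer (R : Type*) [CommRing R] [IsDomain R] : Prop :=
  ∀ I : Ideal R, I ≠ ⊥ → I.FG → IsInvertibleIdeal R I

/-- A prime `P` is sharp if it contains a finitely generated ideal contained
only in the maximal ideals that contain `P`. -/
def IsSharp (R : Type*) [CommRing R] (P : Ideal R) : Prop :=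
  ∃ I : Ideal R, I.FG ∧ I ≤ P ∧ ∀ M : Ideal R, M.IsMaximal → I ≤ M → P ≤ M



theorem prufer_dvd_total (R : Type*) [CommRing R] [IsDomain R]
    (hR : ∀ I : Ideal R, I ≠ ⊥ → I.FG → IsInvertibleIdeal R I)
    (M : Ideal R) (hM : M.IsMaximal) (r s : R) :
    algebraMap R (Localization.AtPrime M) r ∣ algebraMap R (Localization.AtPrime M) s ∨
    algebraMap R (Localization.AtPrime M) s ∣ algebraMap R (Localization.AtPrime M) r := by
  set f := algebraMap R (Localization.AtPrime M)
  by_cases hr : r = 0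
  · right; simp [hr, f]
  set I : Ideal R := Ideal.span {r, s} with hI
  have hIbot : I ≠ ⊥ := by
    intro hb
    apply hr
    have : r ∈ I := Ideal.subset_span (by simp)
    simpa [hb] using this
  have hIfg : I.FG := Submodule.fg_span (Set.toFinite _)
  obtain ⟨u, hu⟩ := hR I hIbot hIfg
  set K := FractionRing R
  set g := algebraMap R K
  have hmul : (I : FractionalIdeal (nonZeroDivisors R) K) * ↑u⁻¹ = 1 := by
    rw [← hu]; exact u.mul_inv
  have h1 : (1 : K) ∈ ((I : FractionalIdeal (nonZeroDivisors R) K) * ↑u⁻¹ :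
      FractionalIdeal (nonZeroDivisors R) K) := by
    rw [hmul]; exact FractionalIdeal.one_mem_one _
  rw [← FractionalIdeal.mem_coe, FractionalIdeal.coe_mul] at h1
  set J' : Submodule R K := (((u⁻¹ : (FractionalIdeal (nonZeroDivisors R) K)ˣ) :
      FractionalIdeal (nonZeroDivisors R) K) : Submodule R K) with hJ'
  -- 1 = g r * u' + g s * v' with u', v' ∈ J'
  have key : ∃ u' ∈ J', ∃ v' ∈ J', (1 : K) = g r * u' + g s * v' := by
    refine Submodule.mul_induction_on h1 ?_ ?_
    · intro m hm n hn
      rw [FractionalIdeal.mem_coe, FractionalIdeal.mem_coeIdeal] at hm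
      obtain ⟨t, htI, rfl⟩ := hm
      rw [hI, Ideal.mem_span_pair] at htI
      obtain ⟨a, b, hab⟩ := htI
      have hm1 : g a * n ∈ J' := by
        have := Submodule.smul_mem J' a hn
        rwa [Algebra.smul_def] at this
      have hm2 : g b * n ∈ J' := by
        have := Submodule.smul_mem J' b hn
        rwa [Algebra.smul_def] at this
      refine ⟨g a * n, hm1, g b * n, hm2, ?_⟩
      rw [← hab]
      push_cast [map_add, map_mul]
      ring
    · rintro x y ⟨ux, hux, vx, hvx, rfl⟩ ⟨uy, huy, vy, hvy, rfl⟩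
      exact ⟨ux + uy, add_mem hux huy, vx + vy, add_mem hvx hvy, by ring⟩
  obtain ⟨u', hu', v', hv', heq⟩ := key
  -- products with r, s land in R
  have hrI : g r ∈ (I : FractionalIdeal (nonZeroDivisors R) K) :=
    (FractionalIdeal.mem_coeIdeal _).mpr ⟨r, Ideal.subset_span (by simp), rfl⟩
  have hsI : g s ∈ (I : FractionalIdeal (nonZeroDivisors R) K) :=
    (FractionalIdeal.mem_coeIdeal _).mpr ⟨s, Ideal.subset_span (by simp), rfl⟩
  have mem1 : ∀ x ∈ (I : FractionalIdeal (nonZeroDivisors R) K), ∀ y ∈ J',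
      ∃ c : R, g c = x * y := by
    intro x hx y hy
    have : x * y ∈ ((I : FractionalIdeal (nonZeroDivisors R) K) * ↑u⁻¹ :
        FractionalIdeal (nonZeroDivisors R) K) := FractionalIdeal.mul_mem_mul hx hy
    rw [hmul, FractionalIdeal.mem_one_iff] at this
    exact this
  obtain ⟨a, ha⟩ := mem1 _ hrI _ hu'
  obtain ⟨b, hb⟩ := mem1 _ hsI _ hu'
  obtain ⟨c, hc⟩ := mem1 _ hrI _ hv'
  obtain ⟨d, hd⟩ := mem1 _ hsI _ hv'
  have hg : Function.Injective g := IsFractionRing.injective R K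
  have had : a + d = 1 := by
    apply hg
    rw [map_add, map_one, ha, hd, heq]
  have key2 : a ∉ M ∨ d ∉ M := by
    by_contra hcon
    push_neg at hcon
    exact hM.ne_top (M.eq_top_of_isUnit_mem (had ▸ M.add_mem hcon.1 hcon.2) isUnit_one)
  rcases key2 with hnot | hnot
  · -- f r ∣ f s, using s * a = r * b
    left
    have hsab : s * a = r * b := by
      apply hg
      rw [map_mul, map_mul, ha, hb]; ring
    obtain ⟨w, hw⟩ := (IsLocalization.AtPrime.isUnit_to_map_iff
      (Localization.AtPrime M) M a).mpr hnot
    refine ⟨f b * ↑w⁻¹, ?_⟩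
    have : f s * ↑w = f r * f b := by
      rw [hw, ← map_mul, ← map_mul, hsab]
    calc f s = f s * ↑w * ↑w⁻¹ := by rw [mul_assoc, w.mul_inv, mul_one]
    _ = f r * (f b * ↑w⁻¹) := by rw [this]; ring
  · right
    have hsab : r * d = s * c := by
      apply hg
      rw [map_mul, map_mul, hc, hd]; ring
    obtain ⟨w, hw⟩ := (IsLocalization.AtPrime.isUnit_to_map_iff
      (Localization.AtPrime M) M d).mpr hnot
    refine ⟨f c * ↑w⁻¹, ?_⟩
    have : f r * ↑w = f s * f c := by
      rw [hw, ← map_mul, ← map_mul, hsab]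
    calc f r = f r * ↑w * ↑w⁻¹ := by rw [mul_assoc, w.mul_inv, mul_one]
    _ = f s * (f c * ↑w⁻¹) := by rw [this]; ring

theorem prufer_valuationRing (R : Type*) [CommRing R] [IsDomain R]
    (hR : ∀ I : Ideal R, I ≠ ⊥ → I.FG → IsInvertibleIdeal R I)
    (M : Ideal R) (hM : M.IsMaximal) : ValuationRing (Localization.AtPrime M) := by
  have : IsDomain (Localization.AtPrime M) :=
    IsLocalization.isDomain_localization M.primeCompl_le_nonZeroDivisors
  rw [ValuationRing.iff_dvd_total]
  constructor
  intro x y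
  set f := algebraMap R (Localization.AtPrime M)
  obtain ⟨⟨r, m⟩, hx⟩ := IsLocalization.surj M.primeCompl x
  obtain ⟨⟨s, n⟩, hy⟩ := IsLocalization.surj M.primeCompl y
  have hmu : IsUnit (f m) := IsLocalization.map_units _ m
  have hnu : IsUnit (f n) := IsLocalization.map_units _ n
  have hxr : Associated x (f r) := by
    obtain ⟨w, hw⟩ := hmu
    exact ⟨w, by rw [hw]; exact hx⟩
  have hys : Associated y (f s) := by
    obtain ⟨w, hw⟩ := hnu
    exact ⟨w, by rw [hw]; exact hy⟩
  rcases prufer_dvd_total R hR M hM r s with hd | hd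
  · exact Or.inl ((hxr.dvd_iff_dvd_left.mpr) ((hys.dvd_iff_dvd_right.mpr) hd))
  · exact Or.inr ((hys.dvd_iff_dvd_left.mpr) ((hxr.dvd_iff_dvd_right.mpr) hd))


/-- In a Prüfer domain, a sharp prime `P` contains a finitely generated ideal `J`
such that every ideal containing `J` is comparable with `P`. -/
theorem exists_fg_comparable_of_sharp (R : Type*) [CommRing R] [IsDomain R]
    (hR : IsPrufer R) (P : Ideal R) (hP : P.IsPrime) (h0 : P ≠ ⊥)
    (h : ∃ I : Ideal R, I.FG ∧ I ≤ P ∧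
      ∀ M : Ideal R, M.IsMaximal → I ≤ M → P ≤ M) :
    ∃ J : Ideal R, J.FG ∧ J ≤ P ∧ ∀ A : Ideal R, J ≤ A → A ≤ P ∨ P ≤ A := by
  obtain ⟨I, hIfg, hIP, hImax⟩ := h
  refine ⟨I, hIfg, hIP, fun A hIA => ?_⟩
  by_cases hAP : A ≤ P
  · exact Or.inl hAP
  right
  obtain ⟨a, haA, haP⟩ := SetLike.not_le_iff_exists.mp hAP
  apply Ideal.le_of_localization_maximal
  intro M hM
  set f := algebraMap R (Localization.AtPrime M)
  by_cases hAM : A ≤ M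
  · -- P ≤ M, use valuation ring comparability
    have hPM : P ≤ M := hImax M hM (hIA.trans hAM)
    have : IsDomain (Localization.AtPrime M) :=
      IsLocalization.isDomain_localization M.primeCompl_le_nonZeroDivisors
    haveI hval : ValuationRing (Localization.AtPrime M) := prufer_valuationRing R hR M hM
    rcases (ValuationRing.le_total_ideal (Localization.AtPrime M)).total
      (Ideal.map f P) (Ideal.map f A) with hle | hle
    · exact hle
    · -- f a ∈ map f P, pull back
      exfalso
      have hfa : f a ∈ Ideal.map f P := hle (Ideal.mem_map_of_mem f haA)
      have hdisj : Disjoint (M.primeCompl : Set R) (P : Set R) := by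
        rw [Set.disjoint_iff]
        rintro x ⟨hx1, hx2⟩
        exact hx1 (hPM hx2)
      have := IsLocalization.comap_map_of_isPrime_disjoint M.primeCompl
        (Localization.AtPrime M) hP hdisj
      apply haP
      rw [← this]
      exact hfa
  · -- map f A = ⊤
    obtain ⟨x, hxA, hxM⟩ := SetLike.not_le_iff_exists.mp hAM
    have : Ideal.map f A = ⊤ :=
      Ideal.eq_top_of_isUnit_mem _ (Ideal.mem_map_of_mem f hxA)
        ((IsLocalization.AtPrime.isUnit_to_map_iff (Localization.AtPrime M) M x).mpr hxM)
    rw [this]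
    exact le_top
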